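/- Let λ_n > 0 for n = 2,...,N and define S(k) = Σ_{n=2}^N 1/(1 + (γτλ_n + k)/(γλ_n(γτλ_n + k) + k²mλ_n)) with γ, τ, m > 0 fixed. Then S is strictly increasing in k on (0, ∞) and lim_{k→∞} S(k) = N − 1. -/

import Mathlib

open Filter

lemma dapi_term_lt (γ τ m l : ℝ) (hγ : 0 < γ) (hτ : 0 < τ) (hm : 0 < m)
    (hl : 0 < l) {x y : ℝ} (hx : 0 < x) (hxy : x < y) :
    1 / (1 + (γ * τ * l + x) / (γ * l * (γ * τ * l + x) + x ^ 2 * m * l)) <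
    1 / (1 + (γ * τ * l + y) / (γ * l * (γ * τ * l + y) + y ^ 2 * m * l)) := by
  have hy : 0 < y := hx.trans hxy
  have hDx : 0 < γ * l * (γ * τ * l + x) + x ^ 2 * m * l := by positivity
  have hDy : 0 < γ * l * (γ * τ * l + y) + y ^ 2 * m * l := by positivity
  have hry : 0 < (γ * τ * l + y) / (γ * l * (γ * τ * l + y) + y ^ 2 * m * l) := by
    positivity
  have hlt : (γ * τ * l + y) / (γ * l * (γ * τ * l + y) + y ^ 2 * m * l) <
      (γ * τ * l + x) / (γ * l * (γ * τ * l + x) + x ^ 2 * m * l) := by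
    rw [div_lt_div_iff₀ hDy hDx]
    have key : 0 < m * l * ((y - x) * (γ * τ * l * (y + x) + x * y)) := by
      have : 0 < γ * τ * l * (y + x) + x * y := by positivity
      have hyx : 0 < y - x := sub_pos.2 hxy
      positivity
    nlinarith [key]
  apply one_div_lt_one_div_of_lt
  · positivity
  · linarith

lemma dapi_term_tendsto (γ τ m l : ℝ) (hγ : 0 < γ) (hτ : 0 < τ) (hm : 0 < m)
    (hl : 0 < l) :
    Tendsto (fun k : ℝ => 1 / (1 + (γ * τ * l + k) /
        (γ * l * (γ * τ * l + k) + k ^ 2 * m * l))) atTop (nhds 1) := by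
  have hr : Tendsto (fun k : ℝ => (γ * τ * l + k) /
      (γ * l * (γ * τ * l + k) + k ^ 2 * m * l)) atTop (nhds 0) := by
    have hdenom : Tendsto (fun k : ℝ => γ * l * (γ * τ * l) / k + γ * l + k * (m * l))
        atTop atTop := by
      have h1 : Tendsto (fun k : ℝ => γ * l * (γ * τ * l) / k + γ * l) atTop
          (nhds (0 + γ * l)) := by
        exact (tendsto_const_nhds.div_atTop tendsto_id).add tendsto_const_nhds
      have h2 : Tendsto (fun k : ℝ => k * (m * l)) atTop atTop :=
        Tendsto.atTop_mul_const (by positivity) tendsto_id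
      exact h1.add_atTop h2
    have hnum : Tendsto (fun k : ℝ => γ * τ * l / k + 1) atTop (nhds (0 + 1)) :=
      (tendsto_const_nhds.div_atTop tendsto_id).add tendsto_const_nhds
    have hg : Tendsto (fun k : ℝ => (γ * τ * l / k + 1) /
        (γ * l * (γ * τ * l) / k + γ * l + k * (m * l))) atTop (nhds 0) :=
      hnum.div_atTop hdenom
    refine hg.congr' ?_
    filter_upwards [eventually_gt_atTop (0 : ℝ)] with k hk
    have hk0 : k ≠ 0 := hk.ne'
    have hD : (0:ℝ) < γ * l * (γ * τ * l + k) + k ^ 2 * m * l := by positivity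
    have hd' : (0:ℝ) < γ * l * (γ * τ * l) / k + γ * l + k * (m * l) := by positivity
    rw [div_eq_div_iff hd'.ne' hD.ne']
    field_simp
  have h1 : Tendsto (fun k : ℝ => 1 + (γ * τ * l + k) /
      (γ * l * (γ * τ * l + k) + k ^ 2 * m * l)) atTop (nhds (1 + 0)) :=
    tendsto_const_nhds.add hr
  have h2 : Tendsto (fun k : ℝ => 1 / (1 + (γ * τ * l + k) /
      (γ * l * (γ * τ * l + k) + k ^ 2 * m * l))) atTop (nhds (1 / (1 + 0))) :=
    tendsto_const_nhds.div h1 (by norm_num)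
  simpa using h2

theorem dapi_total_loss_strictMono_in_k_and_limit
    (γ τ m : ℝ) (hγ : 0 < γ) (hτ : 0 < τ) (hm : 0 < m)
    (n : ℕ) (hn : 0 < n) (lam : Fin n → ℝ) (hlam : ∀ i, 0 < lam i) :
    StrictMonoOn (fun k : ℝ => ∑ i, 1 / (1 + (γ * τ * lam i + k) /
        (γ * lam i * (γ * τ * lam i + k) + k ^ 2 * m * lam i))) (Set.Ioi 0) ∧
    Filter.Tendsto (fun k : ℝ => ∑ i, 1 / (1 + (γ * τ * lam i + k) /
        (γ * lam i * (γ * τ * lam i + k) + k ^ 2 * m * lam i)))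
      Filter.atTop (nhds (n : ℝ)) := by
  constructor
  · intro x hx y hy hxy
    have : Nonempty (Fin n) := ⟨⟨0, hn⟩⟩
    apply Finset.sum_lt_sum_of_nonempty Finset.univ_nonempty
    intro i _
    exact dapi_term_lt γ τ m (lam i) hγ hτ hm (hlam i) hx hxy
  · have h : Tendsto (fun k : ℝ => ∑ i, 1 / (1 + (γ * τ * lam i + k) /
        (γ * lam i * (γ * τ * lam i + k) + k ^ 2 * m * lam i)))
        atTop (nhds (∑ _i : Fin n, (1 : ℝ))) := by
      exact tendsto_finset_sum _ fun i _ =>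
        dapi_term_tendsto γ τ m (lam i) hγ hτ hm (hlam i)
    simpa using h
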